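/- arXiv:1501.02389 — 4 statements merged into one kernel-verified Lean document; each statement's English description precedes it below -/
import Mathlib

section
/- (Sharp lower bound for the variance of unit-level effects) For binary potential outcomes, S_τ²/N ≥ |τ̄|(1 − |τ̄|)/(N−1), where τ̄ = (N₁₀ − N₀₁)/N is the average causal effect. -/
open Finset

noncomputable def ind (b : Bool) : ℝ := if b then 1 else 0

def cnt (N : ℕ) (Y1 Y0 : Fin N → Bool) (a b : Bool) : ℕ :=
  (Finset.univ.filter (fun i => Y1 i = a ∧ Y0 i = b)).card

noncomputable def tauUnit (N : ℕ) (Y1 Y0 : Fin N → Bool) (i : Fin N) : ℝ :=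
  ind (Y1 i) - ind (Y0 i)

noncomputable def tauBar (N : ℕ) (Y1 Y0 : Fin N → Bool) : ℝ :=
  (∑ i, tauUnit N Y1 Y0 i) / N

noncomputable def Stau2 (N : ℕ) (Y1 Y0 : Fin N → Bool) : ℝ :=
  (∑ i, (tauUnit N Y1 Y0 i - tauBar N Y1 Y0) ^ 2) / ((N : ℝ) - 1)

theorem sharp_lower_bound (N : ℕ) (hN : 2 ≤ N) (Y1 Y0 : Fin N → Bool) :
    Stau2 N Y1 Y0 / N ≥
      |tauBar N Y1 Y0| * (1 - |tauBar N Y1 Y0|) / ((N : ℝ) - 1) := by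
  set t := tauUnit N Y1 Y0 with ht
  set m := tauBar N Y1 Y0 with hm
  have hNpos : (0:ℝ) < N := by
    have : (2:ℝ) ≤ N := by exact_mod_cast hN
    linarith
  have hN1 : (0:ℝ) < (N:ℝ) - 1 := by
    have : (2:ℝ) ≤ N := by exact_mod_cast hN
    linarith
  have hsum : ∑ i, t i = N * m := by
    rw [hm]
    unfold tauBar
    field_simp
    rfl
  have hsq : ∀ i, t i ^ 2 = |t i| := by
    intro i
    simp only [ht, tauUnit, ind]
    cases Y1 i <;> cases Y0 i <;> norm_num
  have expand : ∑ i, (t i - m) ^ 2 = (∑ i, |t i|) - N * m ^ 2 := by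
    have : ∀ i ∈ Finset.univ, (t i - m) ^ 2 = |t i| - 2 * m * t i + m ^ 2 := by
      intro i _
      rw [← hsq i]; ring
    rw [Finset.sum_congr rfl this]
    rw [Finset.sum_add_distrib, Finset.sum_sub_distrib, ← Finset.mul_sum, hsum,
      Finset.sum_const, Finset.card_univ, Fintype.card_fin, nsmul_eq_mul]
    ring
  have habs : |∑ i, t i| ≤ ∑ i, |t i| := Finset.abs_sum_le_sum_abs _ _
  rw [hsum, abs_mul, abs_of_pos hNpos] at habs
  have key : ∑ i, (t i - m) ^ 2 ≥ N * |m| - N * m ^ 2 := by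
    rw [expand]; linarith
  have hm2 : m ^ 2 = |m| ^ 2 := (sq_abs m).symm
  unfold Stau2
  simp only [← ht, ← hm]
  rw [ge_iff_le, div_div, div_le_div_iff₀ hN1 (by positivity)]
  have step : (↑N * |m| - ↑N * m ^ 2) * ((↑N:ℝ) - 1) ≤ (∑ i, (t i - m) ^ 2) * ((↑N:ℝ) - 1) :=
    mul_le_mul_of_nonneg_right (ge_iff_le.mp key) hN1.le
  rw [hm2] at step
  linarith [step]
end

section
/- For binary potential outcomes, equality S_τ²/N = |τ̄|(1 − |τ̄|)/(N−1) holds if and only if monotonicity holds, i.e., N₀₁ = 0 or N₁₀ = 0. -/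
open Finset

theorem sharp_bound_equality_iff_monotone (N : ℕ) (hN : 2 ≤ N) (Y1 Y0 : Fin N → Bool) :
    Stau2 N Y1 Y0 / N =
      |tauBar N Y1 Y0| * (1 - |tauBar N Y1 Y0|) / ((N : ℝ) - 1) ↔
      (cnt N Y1 Y0 false true = 0 ∨ cnt N Y1 Y0 true false = 0) := by
  have hN2 : (2:ℝ) ≤ N := by exact_mod_cast hN
  have hNpos : (0:ℝ) < N := by linarith
  have hN1 : (0:ℝ) < (N:ℝ) - 1 := by linarith
  set A : ℝ := (cnt N Y1 Y0 true false : ℝ) with hAdef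
  set B : ℝ := (cnt N Y1 Y0 false true : ℝ) with hBdef
  have hA0 : 0 ≤ A := by positivity
  have hB0 : 0 ≤ B := by positivity
  have hAsum : A = ∑ i : Fin N, (if Y1 i = true ∧ Y0 i = false then (1:ℝ) else 0) := by
    rw [hAdef, cnt, Finset.card_filter]; push_cast; simp [apply_ite]
  have hBsum : B = ∑ i : Fin N, (if Y1 i = false ∧ Y0 i = true then (1:ℝ) else 0) := by
    rw [hBdef, cnt, Finset.card_filter]; push_cast; simp [apply_ite]
  have hs1 : ∑ i, tauUnit N Y1 Y0 i = A - B := by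
    rw [hAsum, hBsum, ← Finset.sum_sub_distrib]
    refine Finset.sum_congr rfl fun i _ => ?_
    cases h1 : Y1 i <;> cases h0 : Y0 i <;> simp [tauUnit, ind, h1, h0]
  have hs2 : ∑ i, (tauUnit N Y1 Y0 i) ^ 2 = A + B := by
    rw [hAsum, hBsum, ← Finset.sum_add_distrib]
    refine Finset.sum_congr rfl fun i _ => ?_
    cases h1 : Y1 i <;> cases h0 : Y0 i <;> simp [tauUnit, ind, h1, h0]
  have htb : tauBar N Y1 Y0 = (A - B) / N := by rw [tauBar, hs1]
  have hsq : ∑ i, (tauUnit N Y1 Y0 i - tauBar N Y1 Y0) ^ 2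
      = (A + B) - (A - B) ^ 2 / N := by
    have expand : ∑ i, (tauUnit N Y1 Y0 i - tauBar N Y1 Y0) ^ 2
        = (∑ i, (tauUnit N Y1 Y0 i) ^ 2) - 2 * tauBar N Y1 Y0 * (∑ i, tauUnit N Y1 Y0 i)
          + (N : ℝ) * (tauBar N Y1 Y0) ^ 2 := by
      have : ∀ i ∈ Finset.univ, (tauUnit N Y1 Y0 i - tauBar N Y1 Y0) ^ 2
          = (tauUnit N Y1 Y0 i) ^ 2 - 2 * tauBar N Y1 Y0 * tauUnit N Y1 Y0 i
            + (tauBar N Y1 Y0) ^ 2 := fun i _ => by ring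
      rw [Finset.sum_congr rfl this, Finset.sum_add_distrib, Finset.sum_sub_distrib,
        ← Finset.mul_sum, Finset.sum_const, Finset.card_univ, Fintype.card_fin,
        nsmul_eq_mul]
    rw [expand, hs2, hs1, htb]
    field_simp
    ring
  have habs : |tauBar N Y1 Y0| = |A - B| / N := by
    rw [htb, abs_div, abs_of_pos hNpos]
  rw [Stau2, hsq, habs]
  set C : ℝ := |A - B| with hCdef
  have hC2 : C ^ 2 = (A - B) ^ 2 := sq_abs _
  have hC0 : 0 ≤ C := abs_nonneg _
  have hrw : (A + B - (A - B) ^ 2 / ↑N) / (↑N - 1) / ↑N - C / ↑N * (1 - C / ↑N) / (↑N - 1)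
      = (A + B - C) / (↑N * (↑N - 1)) := by
    rw [← hC2]
    field_simp
    ring
  have hmain : (A + B - (A - B) ^ 2 / ↑N) / (↑N - 1) / ↑N = C / ↑N * (1 - C / ↑N) / (↑N - 1)
      ↔ A + B = C := by
    rw [← sub_eq_zero, hrw, div_eq_zero_iff]
    constructor
    · rintro (h | h)
      · linarith
      · exfalso; nlinarith
    · intro h; left; linarith
  rw [hmain]
  constructor
  · intro key
    rcases abs_cases (A - B) with ⟨h1, _⟩ | ⟨h1, _⟩
    · left
      have hB : B = 0 := by rw [hCdef] at key; linarith
      rw [hBdef] at hB; exact_mod_cast hB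
    · right
      have hA : A = 0 := by rw [hCdef, h1] at key; linarith
      rw [hAdef] at hA; exact_mod_cast hA
  · intro h
    rcases h with h | h
    · have hB : B = 0 := by rw [hBdef]; exact_mod_cast h
      rw [hCdef, hB]; simp [abs_of_nonneg hA0]
    · have hA : A = 0 := by rw [hAdef]; exact_mod_cast h
      rw [hCdef, hA]; simp [abs_of_nonneg hB0, abs_sub_comm]
end

section
/- (Neyman 1923) In a completely randomized experiment, τ̂ = p̂₁ − p̂₀ is unbiased for τ̄ = p₁ − p₀, and Var(τ̂) = S₁²/N₁ + S₀²/N₀ − S_τ²/N. -/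
open Finset

/-- The set of completely randomized assignments of `N1` of `N` units to treatment. -/
def assignments (N N1 : ℕ) : Finset (Fin N → Bool) :=
  Finset.univ.filter (fun w => (Finset.univ.filter (fun i => w i = true)).card = N1)

/-- Expectation of `f` under the uniform distribution over completely
randomized assignments. -/
noncomputable def Eexp (N N1 : ℕ) (f : (Fin N → Bool) → ℝ) : ℝ :=
  (∑ w ∈ assignments N N1, f w) / (assignments N N1).card

lemma mem_assignments {N N1 : ℕ} (w : Fin N → Bool) :
    w ∈ assignments N N1 ↔ (Finset.univ.filter (fun i => w i = true)).card = N1 := by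
  simp [assignments]

lemma count_general (N N1 : ℕ) (t : Finset (Fin N)) (ht : t.card ≤ N1) :
    ((assignments N N1).filter (fun w => ∀ i ∈ t, w i = true)).card
      = (N - t.card).choose (N1 - t.card) := by
  have hcard : ((Finset.univ \ t).powersetCard (N1 - t.card)).card
      = (N - t.card).choose (N1 - t.card) := by
    rw [Finset.card_powersetCard, Finset.card_sdiff_of_subset (Finset.subset_univ t),
      Finset.card_univ, Fintype.card_fin]
  rw [← hcard]
  apply Finset.card_bij' (fun w _ => (Finset.univ.filter (fun i => w i = true)) \ t)
    (fun v _ => fun i => decide (i ∈ v ∪ t))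
  · intro w hw
    rw [Finset.mem_filter, mem_assignments] at hw
    obtain ⟨hwc, hwt⟩ := hw
    rw [Finset.mem_powersetCard]
    have hsub : t ⊆ Finset.univ.filter (fun i => w i = true) := by
      intro i hi; simp [hwt i hi]
    constructor
    · exact Finset.sdiff_subset_sdiff (Finset.subset_univ _) le_rfl
    · rw [Finset.card_sdiff_of_subset hsub, hwc]
  · intro v hv
    rw [Finset.mem_powersetCard] at hv
    obtain ⟨hvs, hvc⟩ := hv
    have hdisj : Disjoint v t := by
      rw [Finset.disjoint_left]
      intro i hiv hit
      exact (Finset.mem_sdiff.mp (hvs hiv)).2 hit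
    rw [Finset.mem_filter, mem_assignments]
    constructor
    · have : (Finset.univ.filter (fun i => (decide (i ∈ v ∪ t)) = true)) = v ∪ t := by
        ext i; simp
      rw [this, Finset.card_union_of_disjoint hdisj, hvc]
      omega
    · intro i hi
      simp [Finset.mem_union, hi]
  · intro w hw
    rw [Finset.mem_filter, mem_assignments] at hw
    obtain ⟨hwc, hwt⟩ := hw
    funext i
    by_cases h : w i = true
    · simp [h]
    · have hit : i ∉ t := fun hi => h (hwt i hi)
      simp [h, hit]
  · intro v hv
    rw [Finset.mem_powersetCard] at hv
    obtain ⟨hvs, hvc⟩ := hv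
    have hdisj : Disjoint v t := by
      rw [Finset.disjoint_left]
      intro i hiv hit
      exact (Finset.mem_sdiff.mp (hvs hiv)).2 hit
    ext i
    simp only [Finset.mem_sdiff, Finset.mem_filter, Finset.mem_univ, true_and,
      decide_eq_true_eq, Finset.mem_union]
    constructor
    · rintro ⟨h1 | h1, h2⟩
      · exact h1
      · exact absurd h1 h2
    · intro hi
      exact ⟨Or.inl hi, fun hit => Finset.disjoint_left.mp hdisj hi hit⟩

lemma card_assignments (N N1 : ℕ) : (assignments N N1).card = N.choose N1 := by
  have h := count_general N N1 ∅ (Nat.zero_le _)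
  simpa using h

lemma sum_ind (N N1 : ℕ) (hN1 : 1 ≤ N1) (hle : N1 ≤ N) (i : Fin N) :
    (∑ w ∈ assignments N N1, ind (w i)) = (N.choose N1 : ℝ) * N1 / N := by
  have hcount : ((assignments N N1).filter (fun w => w i = true)).card
      = (N - 1).choose (N1 - 1) := by
    have h := count_general N N1 {i} (by simpa using hN1)
    simpa using h
  have hsum : (∑ w ∈ assignments N N1, ind (w i))
      = (((assignments N N1).filter (fun w => w i = true)).card : ℝ) := by
    rw [← Finset.sum_boole]
    exact Finset.sum_congr rfl (fun w _ => by simp [ind])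
  obtain ⟨m, rfl⟩ := Nat.exists_eq_succ_of_ne_zero (Nat.one_le_iff_ne_zero.mp (hN1.trans hle))
  obtain ⟨k, rfl⟩ := Nat.exists_eq_succ_of_ne_zero (Nat.one_le_iff_ne_zero.mp hN1)
  have hnat : (m + 1) * m.choose k = (m + 1).choose (k + 1) * (k + 1) :=
    Nat.add_one_mul_choose_eq m k
  rw [hsum, hcount]
  have hne : ((m:ℝ) + 1) ≠ 0 := by positivity
  rw [eq_div_iff (by push_cast; positivity)]
  have hc : ((m:ℝ) + 1) * (m.choose k : ℝ) = ((m + 1).choose (k + 1) : ℝ) * ((k:ℝ) + 1) := by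
    exact_mod_cast congrArg (Nat.cast (R := ℝ)) hnat
  push_cast
  linarith [hc]

lemma sum_ind2 (N N1 : ℕ) (hN1 : 1 ≤ N1) (hle : N1 ≤ N) (hN : 2 ≤ N) (i j : Fin N)
    (hij : i ≠ j) :
    (∑ w ∈ assignments N N1, ind (w i) * ind (w j))
      = (N.choose N1 : ℝ) * ((N1 : ℝ) * ((N1 : ℝ) - 1)) / ((N : ℝ) * ((N : ℝ) - 1)) := by
  have hsum : (∑ w ∈ assignments N N1, ind (w i) * ind (w j))
      = (((assignments N N1).filter (fun w => w i = true ∧ w j = true)).card : ℝ) := by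
    rw [← Finset.sum_boole]
    refine Finset.sum_congr rfl (fun w _ => ?_)
    by_cases h1 : w i = true <;> by_cases h2 : w j = true <;> simp [ind, h1, h2]
  rcases Nat.lt_or_ge N1 2 with h2 | h2
  · -- N1 = 1
    have hN1' : N1 = 1 := by omega
    subst hN1'
    have hempty : ((assignments N 1).filter (fun w => w i = true ∧ w j = true)) = ∅ := by
      rw [Finset.filter_eq_empty_iff]
      rintro w hw ⟨h1, h2⟩
      simp only [assignments, Finset.mem_filter, Finset.mem_univ, true_and] at hw
      have : ({i, j} : Finset (Fin N)) ⊆ Finset.univ.filter (fun k => w k = true) := by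
        intro k hk
        rcases Finset.mem_insert.mp hk with rfl | hk
        · simp [h1]
        · rw [Finset.mem_singleton] at hk; subst hk; simp [h2]
      have hc := Finset.card_le_card this
      rw [Finset.card_insert_of_notMem (by simpa using hij), Finset.card_singleton, hw] at hc
      omega
    rw [hsum, hempty]
    simp
  · -- N1 ≥ 2
    have hcount : ((assignments N N1).filter (fun w => w i = true ∧ w j = true)).card
        = (N - 2).choose (N1 - 2) := by
      have h := count_general N N1 {i, j} (by
        rw [Finset.card_insert_of_notMem (by simpa using hij), Finset.card_singleton]; omega)
      rw [Finset.card_insert_of_notMem (by simpa using hij), Finset.card_singleton] at h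
      rw [← h]
      congr 1
      apply Finset.filter_congr
      intro w _
      constructor
      · rintro ⟨h1, h2⟩ k hk
        rcases Finset.mem_insert.mp hk with rfl | hk
        · exact h1
        · rw [Finset.mem_singleton] at hk; subst hk; exact h2
      · intro h
        exact ⟨h i (by simp), h j (by simp)⟩
    obtain ⟨m, hm⟩ := Nat.exists_eq_add_of_le hN
    obtain ⟨k, hk⟩ := Nat.exists_eq_add_of_le h2
    have hm' : N = m + 2 := by rw [hm]; ring
    have hk' : N1 = k + 2 := by rw [hk]; ring
    clear hm hk
    subst hm' hk'
    have h1 : (m + 1) * m.choose k = (m + 1).choose (k + 1) * (k + 1) :=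
      Nat.add_one_mul_choose_eq m k
    have h2' : (m + 2) * (m + 1).choose (k + 1) = (m + 2).choose (k + 2) * (k + 2) :=
      Nat.add_one_mul_choose_eq (m + 1) (k + 1)
    have hnat : (m + 2) * ((m + 1) * m.choose k) = (m + 2).choose (k + 2) * ((k + 2) * (k + 1)) := by
      rw [h1, ← mul_assoc, h2']; ring
    rw [hsum, hcount]
    have hpos : ((m:ℝ) + 2) * (((m:ℝ) + 2) - 1) ≠ 0 := by
      have h : ((m:ℝ) + 2) * (((m:ℝ) + 2) - 1) = ((m:ℝ) + 2) * ((m:ℝ) + 1) := by ring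
      rw [h]; positivity
    rw [eq_div_iff (by push_cast; exact hpos)]
    have hc : ((m:ℝ) + 2) * (((m:ℝ) + 1) * (m.choose k : ℝ))
        = ((m + 2).choose (k + 2) : ℝ) * (((k:ℝ) + 2) * ((k:ℝ) + 1)) := by
      exact_mod_cast congrArg (Nat.cast (R := ℝ)) hnat
    push_cast
    nlinarith [hc]

set_option maxHeartbeats 2000000 in
theorem neyman_1923 (N N1 N0 : ℕ) (hN : N = N1 + N0) (hN1 : 1 ≤ N1) (hN0 : 1 ≤ N0)
    (hNge : 2 ≤ N) (Y1 Y0 : Fin N → ℝ)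
    (p1 p0 S1sq S0sq Stau2 : ℝ)
    (hp1 : p1 = (∑ i, Y1 i) / N) (hp0 : p0 = (∑ i, Y0 i) / N)
    (hS1 : S1sq = (∑ i, (Y1 i - p1) ^ 2) / ((N : ℝ) - 1))
    (hS0 : S0sq = (∑ i, (Y0 i - p0) ^ 2) / ((N : ℝ) - 1))
    (hStau : Stau2 = (∑ i, ((Y1 i - Y0 i) - (p1 - p0)) ^ 2) / ((N : ℝ) - 1))
    (tauhat : (Fin N → Bool) → ℝ)
    (htauhat : ∀ w, tauhat w =
      (∑ i, ind (w i) * Y1 i) / N1 - (∑ i, (1 - ind (w i)) * Y0 i) / N0) :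
    Eexp N N1 tauhat = p1 - p0 ∧
    Eexp N N1 (fun w => (tauhat w - (p1 - p0)) ^ 2) =
      S1sq / N1 + S0sq / N0 - Stau2 / N := by
  have hle : N1 ≤ N := by omega
  have h1ne : (N1:ℝ) ≠ 0 := Nat.cast_ne_zero.mpr (by omega)
  have h0ne : (N0:ℝ) ≠ 0 := Nat.cast_ne_zero.mpr (by omega)
  have hNne : (N:ℝ) ≠ 0 := Nat.cast_ne_zero.mpr (by omega)
  have hN2r : (2:ℝ) ≤ (N:ℝ) := by exact_mod_cast hNge
  have hNm1 : (N:ℝ) - 1 ≠ 0 := by linarith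
  have hNcast : (N:ℝ) = (N1:ℝ) + (N0:ℝ) := by rw [hN]; push_cast; ring
  set Cn := (assignments N N1).card with hCn
  have hCcast : (Cn:ℝ) = (N.choose N1 : ℝ) := by rw [hCn, card_assignments]
  have hCne : (Cn:ℝ) ≠ 0 := by
    rw [hCcast]
    exact_mod_cast (Nat.choose_pos hle).ne'
  set p : ℝ := (N1:ℝ)/(N:ℝ) with hp
  set a : Fin N → ℝ := fun i => Y1 i / N1 + Y0 i / N0 with ha
  -- first moments
  have hsum1 : ∀ i : Fin N, (∑ w ∈ assignments N N1, ind (w i)) = (Cn:ℝ) * p := by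
    intro i
    rw [sum_ind N N1 hN1 hle i, hCcast, hp, mul_div_assoc]
  have hsum2 : ∀ i j : Fin N, i ≠ j →
      (∑ w ∈ assignments N N1, ind (w i) * ind (w j))
        = (Cn:ℝ) * ((N1 : ℝ) * ((N1 : ℝ) - 1)) / ((N : ℝ) * ((N : ℝ) - 1)) := by
    intro i j hij
    rw [sum_ind2 N N1 hN1 hle hNge i j hij, hCcast]
  have hii : ∀ b : Bool, ind b * ind b = ind b := by
    intro b; cases b <;> simp [ind]
  -- centered moments
  have hWdiag : ∀ i : Fin N,
      (∑ w ∈ assignments N N1, (ind (w i) - p) * (ind (w i) - p))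
        = (Cn:ℝ) * (p * (1 - p)) := by
    intro i
    have step : ∀ w : Fin N → Bool,
        (ind (w i) - p) * (ind (w i) - p) = ind (w i) * (1 - 2*p) + p*p := by
      intro w; linear_combination hii (w i)
    calc (∑ w ∈ assignments N N1, (ind (w i) - p) * (ind (w i) - p))
        = ∑ w ∈ assignments N N1, (ind (w i) * (1 - 2*p) + p*p) :=
          Finset.sum_congr rfl (fun w _ => step w)
      _ = (∑ w ∈ assignments N N1, ind (w i)) * (1 - 2*p) + (Cn:ℝ) * (p*p) := by
          rw [Finset.sum_add_distrib, ← Finset.sum_mul, Finset.sum_const, nsmul_eq_mul]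
      _ = (Cn:ℝ) * (p * (1 - p)) := by rw [hsum1 i]; ring
  have hWoff : ∀ i j : Fin N, i ≠ j →
      (∑ w ∈ assignments N N1, (ind (w i) - p) * (ind (w j) - p))
        = -((Cn:ℝ) * (p * (1 - p)) / ((N:ℝ) - 1)) := by
    intro i j hij
    have step : ∀ w : Fin N → Bool,
        (ind (w i) - p) * (ind (w j) - p)
          = ind (w i) * ind (w j) - p * ind (w i) - p * ind (w j) + p*p := by
      intro w; ring
    calc (∑ w ∈ assignments N N1, (ind (w i) - p) * (ind (w j) - p))
        = ∑ w ∈ assignments N N1,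
            (ind (w i) * ind (w j) - p * ind (w i) - p * ind (w j) + p*p) :=
          Finset.sum_congr rfl (fun w _ => step w)
      _ = (∑ w ∈ assignments N N1, ind (w i) * ind (w j))
            - p * (∑ w ∈ assignments N N1, ind (w i))
            - p * (∑ w ∈ assignments N N1, ind (w j)) + (Cn:ℝ) * (p*p) := by
          rw [Finset.sum_add_distrib, Finset.sum_sub_distrib, Finset.sum_sub_distrib,
            ← Finset.mul_sum, ← Finset.mul_sum, Finset.sum_const, nsmul_eq_mul]
      _ = -((Cn:ℝ) * (p * (1 - p)) / ((N:ℝ) - 1)) := by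
          rw [hsum2 i j hij, hsum1 i, hsum1 j, hp]
          field_simp
          try ring
  -- rewriting tauhat
  have htauA : ∀ w : Fin N → Bool,
      tauhat w = (∑ i, ind (w i) * a i) - (∑ i, Y0 i) / N0 := by
    intro w
    have key : (∑ i, ind (w i) * a i)
        = (∑ i, ind (w i) * Y1 i)/(N1:ℝ)
          + ((∑ i, Y0 i)/(N0:ℝ) - (∑ i, (1 - ind (w i)) * Y0 i)/(N0:ℝ)) := by
      rw [Finset.sum_div, Finset.sum_div, Finset.sum_div, ← Finset.sum_sub_distrib,
        ← Finset.sum_add_distrib]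
      refine Finset.sum_congr rfl (fun i _ => ?_)
      rw [ha]
      ring
    rw [htauhat w, key]
    ring
  have htauB : p1 - p0 = p * (∑ i, a i) - (∑ i, Y0 i) / N0 := by
    have hsa : (∑ i, a i) = (∑ i, Y1 i)/(N1:ℝ) + (∑ i, Y0 i)/(N0:ℝ) := by
      simp only [ha]
      rw [Finset.sum_add_distrib, Finset.sum_div, Finset.sum_div]
    rw [hsa, hp1, hp0, hp, hNcast]
    field_simp
    ring
  have hdev : ∀ w : Fin N → Bool,
      tauhat w - (p1 - p0) = ∑ i, (ind (w i) - p) * a i := by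
    intro w
    have hsplit : (∑ i, (ind (w i) - p) * a i)
        = (∑ i, ind (w i) * a i) - p * (∑ i, a i) := by
      rw [Finset.mul_sum, ← Finset.sum_sub_distrib]
      exact Finset.sum_congr rfl (fun i _ => by ring)
    rw [htauA w, htauB, hsplit]
    ring
  constructor
  · -- unbiasedness
    have hnum : (∑ w ∈ assignments N N1, tauhat w) = (Cn:ℝ) * (p1 - p0) := by
      have : ∀ w ∈ assignments N N1, tauhat w = (∑ i, (ind (w i) - p) * a i) + (p1 - p0) := by
        intro w _; have := hdev w; linarith
      rw [Finset.sum_congr rfl this, Finset.sum_add_distrib, Finset.sum_const, nsmul_eq_mul]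
      have hz : (∑ w ∈ assignments N N1, ∑ i, (ind (w i) - p) * a i) = 0 := by
        rw [Finset.sum_comm]
        apply Finset.sum_eq_zero
        intro i _
        rw [← Finset.sum_mul, Finset.sum_sub_distrib, hsum1 i, Finset.sum_const, nsmul_eq_mul]
        ring
      rw [hz]; ring
    show (∑ w ∈ assignments N N1, tauhat w) / (Cn:ℝ) = p1 - p0
    rw [hnum, mul_comm, mul_div_assoc, div_self hCne, mul_one]
  · -- variance
    have hnum : (∑ w ∈ assignments N N1, (tauhat w - (p1 - p0)) ^ 2)
        = (Cn:ℝ) * (p * (1 - p)) * (∑ i, a i * a i)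
          - ((Cn:ℝ) * (p * (1 - p)) / ((N:ℝ) - 1))
            * ((∑ i, a i) * (∑ i, a i) - (∑ i, a i * a i)) := by
      have e1 : ∀ w ∈ assignments N N1, (tauhat w - (p1 - p0)) ^ 2
          = ∑ i, ∑ j, ((ind (w i) - p) * a i) * ((ind (w j) - p) * a j) := by
        intro w _
        rw [hdev w, sq, Finset.sum_mul_sum]
      rw [Finset.sum_congr rfl e1, Finset.sum_comm]
      have e2 : ∀ i : Fin N,
          (∑ w ∈ assignments N N1, ∑ j, ((ind (w i) - p) * a i) * ((ind (w j) - p) * a j))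
          = (a i * a i) * ((Cn:ℝ) * (p * (1-p)))
            + (a i * ((∑ k, a k) - a i)) * (-((Cn:ℝ) * (p * (1 - p)) / ((N:ℝ) - 1))) := by
        intro i
        rw [Finset.sum_comm]
        have e3 : ∀ j : Fin N,
            (∑ w ∈ assignments N N1, ((ind (w i) - p) * a i) * ((ind (w j) - p) * a j))
            = (a i * a j) * (∑ w ∈ assignments N N1, (ind (w i) - p) * (ind (w j) - p)) := by
          intro j
          rw [Finset.mul_sum]
          exact Finset.sum_congr rfl (fun w _ => by ring)
        rw [Finset.sum_congr rfl (fun j _ => e3 j)]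
        rw [← Finset.add_sum_erase _ _ (Finset.mem_univ i), hWdiag i]
        have e4 : ∀ j ∈ Finset.univ.erase i,
            (a i * a j) * (∑ w ∈ assignments N N1, (ind (w i) - p) * (ind (w j) - p))
            = (a i * a j) * (-((Cn:ℝ) * (p * (1 - p)) / ((N:ℝ) - 1))) := by
          intro j hj
          rw [hWoff i j (Ne.symm (Finset.ne_of_mem_erase hj))]
        rw [Finset.sum_congr rfl e4, ← Finset.sum_mul, ← Finset.mul_sum,
          Finset.sum_erase_eq_sub (Finset.mem_univ i)]
        try ring
      rw [Finset.sum_congr rfl (fun i _ => e2 i), Finset.sum_add_distrib,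
        ← Finset.sum_mul, ← Finset.sum_mul]
      have e5 : (∑ i, a i * ((∑ k, a k) - a i))
          = (∑ k, a k) * (∑ k, a k) - (∑ i, a i * a i) := by
        have : ∀ i : Fin N, a i * ((∑ k, a k) - a i)
            = a i * (∑ k, a k) - a i * a i := fun i => by ring
        rw [Finset.sum_congr rfl (fun i _ => this i), Finset.sum_sub_distrib,
          ← Finset.sum_mul]
      rw [e5]
      ring
    show (∑ w ∈ assignments N N1, (tauhat w - (p1 - p0)) ^ 2) / (Cn:ℝ)
      = S1sq / N1 + S0sq / N0 - Stau2 / N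
    rw [hnum]
    -- expand all sums into elementary sums
    have ea2 : (∑ i, a i * a i)
        = (∑ i, Y1 i * Y1 i) / ((N1:ℝ)*(N1:ℝ)) + (∑ i, Y0 i * Y0 i) / ((N0:ℝ)*(N0:ℝ))
          + (∑ i, Y1 i * Y0 i) * (2 / ((N1:ℝ)*(N0:ℝ))) := by
      simp only [ha]
      rw [Finset.sum_div, Finset.sum_div, Finset.sum_mul, ← Finset.sum_add_distrib,
        ← Finset.sum_add_distrib]
      exact Finset.sum_congr rfl (fun i _ => by ring)
    have ea : (∑ i, a i) = (∑ i, Y1 i)/(N1:ℝ) + (∑ i, Y0 i)/(N0:ℝ) := by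
      simp only [ha]
      rw [Finset.sum_add_distrib, Finset.sum_div, Finset.sum_div]
    have ecen : ∀ (f : Fin N → ℝ) (c : ℝ),
        (∑ i, (f i - c) ^ 2)
          = (∑ i, f i * f i) - 2*c*(∑ i, f i) + (N:ℝ)*(c*c) := by
      intro f c
      have h : ∀ i : Fin N, (f i - c)^2 = f i * f i - 2*c*f i + c*c := fun i => by ring
      rw [Finset.sum_congr rfl (fun i _ => h i), Finset.sum_add_distrib,
        Finset.sum_sub_distrib, ← Finset.mul_sum, Finset.sum_const, Finset.card_univ,
        Fintype.card_fin, nsmul_eq_mul]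
    have eqt1 : (∑ i, (Y1 i - Y0 i)) = (∑ i, Y1 i) - (∑ i, Y0 i) :=
      Finset.sum_sub_distrib _ _
    have eqt2 : (∑ i, (Y1 i - Y0 i) * (Y1 i - Y0 i))
        = (∑ i, Y1 i * Y1 i) + (∑ i, Y0 i * Y0 i) - 2*(∑ i, Y1 i * Y0 i) := by
      have h : ∀ i : Fin N, (Y1 i - Y0 i)*(Y1 i - Y0 i)
          = Y1 i*Y1 i + Y0 i*Y0 i - 2*(Y1 i*Y0 i) := fun i => by ring
      rw [Finset.sum_congr rfl (fun i _ => h i), Finset.sum_sub_distrib,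
        Finset.sum_add_distrib, ← Finset.mul_sum]
    have hsne : (N1:ℝ)+(N0:ℝ) ≠ 0 := by rw [← hNcast]; exact hNne
    have hs1ne : (N1:ℝ)+(N0:ℝ)-1 ≠ 0 := by rw [← hNcast]; exact hNm1
    rw [hS1, hS0, hStau, ecen Y1 p1, ecen Y0 p0, ecen (fun i => Y1 i - Y0 i) (p1 - p0),
      eqt1, eqt2, ea2, ea, hp, hp1, hp0, hNcast]
    field_simp
    ring
end

section
/- The cell probabilities defined by π₁₁ = γπ₁₊π₊₁/(1 − π₊₁ + γπ₊₁) etc. are all in [0,1] if and only if γ(π₁₊ − π₊₁) ≤ 1 − π₊₁ and γπ₊₁ > π₁₊ + π₊₁ − 1. -/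
theorem cell_probability_restrictions (γ pi1p pip1 : ℝ) (hγ : 0 < γ)
    (h1p : pi1p ∈ Set.Icc (0 : ℝ) 1) (hp1 : pip1 ∈ Set.Ioo (0 : ℝ) 1)
    (pi11 pi10 pi01 pi00 : ℝ)
    (h11 : pi11 = γ * pi1p * pip1 / (1 - pip1 + γ * pip1))
    (h10 : pi10 = pi1p * (1 - pip1) / (1 - pip1 + γ * pip1))
    (h01 : pi01 = pip1 - pi11)
    (h00 : pi00 = 1 - pi1p - pip1 + pi11) :
    (0 ≤ pi01 ↔ γ * (pi1p - pip1) ≤ 1 - pip1) ∧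
    (0 < pi00 ↔ pi1p + pip1 - 1 < γ * pip1) ∧
    pi11 ∈ Set.Icc (0 : ℝ) 1 ∧ pi10 ∈ Set.Icc (0 : ℝ) 1 := by
  obtain ⟨h1p0, h1p1⟩ := h1p
  obtain ⟨hp10, hp11⟩ := hp1
  have hD : 0 < 1 - pip1 + γ * pip1 := by nlinarith
  subst h11 h10 h01 h00
  refine ⟨?_, ?_, ⟨?_, ?_⟩, ?_, ?_⟩
  · rw [sub_nonneg, div_le_iff₀ hD]
    constructor
    · intro h; nlinarith
    · intro h; nlinarith
  · have ht : γ * pi1p * pip1 / (1 - pip1 + γ * pip1) * (1 - pip1 + γ * pip1)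
        = γ * pi1p * pip1 := div_mul_cancel₀ _ hD.ne'
    constructor
    · intro h; nlinarith
    · intro h; nlinarith
  · positivity
  · rw [div_le_one hD]; nlinarith
  · exact div_nonneg (by nlinarith) hD.le
  · rw [div_le_one hD]; nlinarith
end
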